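/- For the Tribonacci sequence and any k ≥ 2: 16·∑_{j=1}^{k} T(4j−2)² = T(4k)² − 2·T(4k−1)² + 12·T(4k−2)² − 2·T(4k−3)² + T(4k−4)² − 2·T(4k−5)² − 2. -/

import Mathlib

open Finset

theorem stmt17 (T : ℕ → ℤ) (h0 : T 0 = 0) (h1 : T 1 = 1) (h2 : T 2 = 1) (hT : ∀ n, 3 ≤ n → T n = T (n-1) + T (n-2) + T (n-3)) :
    ∀ k, 2 ≤ k → 16*∑ j ∈ Icc 1 k, (T (4*j-2))^2 = (T (4*k))^2 - 2*(T (4*k-1))^2 + 12*(T (4*k-2))^2 - 2*(T (4*k-3))^2 + (T (4*k-4))^2 - 2*(T (4*k-5))^2 - 2 := by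
  have key : ∀ n, 3 ≤ n → T n = T (n-1) + T (n-2) + T (n-3) := hT
  intro k hk
  induction k, hk using Nat.le_induction with
  | base =>
    have e3 : T 3 = 2 := by rw [key 3 (by norm_num)]; norm_num [h0, h1, h2]
    have e4 : T 4 = 4 := by rw [key 4 (by norm_num)]; norm_num [h1, h2, e3]
    have e5 : T 5 = 7 := by rw [key 5 (by norm_num)]; norm_num [h2, e3, e4]
    have e6 : T 6 = 13 := by rw [key 6 (by norm_num)]; norm_num [e3, e4, e5]
    have e7 : T 7 = 24 := by rw [key 7 (by norm_num)]; norm_num [e4, e5, e6]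
    have e8 : T 8 = 44 := by rw [key 8 (by norm_num)]; norm_num [e5, e6, e7]
    norm_num [Finset.sum_Icc_succ_top, e3, e4, e5, e6, e7, e8, h2]
  | succ k hk ih =>
    have hsum : ∑ j ∈ Icc 1 (k+1), (T (4*j-2))^2
        = (∑ j ∈ Icc 1 k, (T (4*j-2))^2) + (T (4*(k+1)-2))^2 :=
      Finset.sum_Icc_succ_top (by omega) _
    rw [hsum, show 4*(k+1) = 4*k+4 from by ring]
    simp only [show 4*k+4-1 = 4*k+3 from by omega, show 4*k+4-2 = 4*k+2 from by omega,
      show 4*k+4-3 = 4*k+1 from by omega, show 4*k+4-4 = 4*k from by omega,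
      show 4*k+4-5 = 4*k-1 from by omega]
    have r9 : T (4*k+4) = T (4*k+3) + T (4*k+2) + T (4*k+1) := by
      have := key (4*k+4) (by omega); simpa using this
    have r8 : T (4*k+3) = T (4*k+2) + T (4*k+1) + T (4*k) := by
      have := key (4*k+3) (by omega); simpa using this
    have r7 : T (4*k+2) = T (4*k+1) + T (4*k) + T (4*k-1) := by
      have := key (4*k+2) (by omega)
      rw [this]; congr 2
    have r6 : T (4*k+1) = T (4*k) + T (4*k-1) + T (4*k-2) := by
      have := key (4*k+1) (by omega)
      rw [this]; congr 2
    have r5 : T (4*k) = T (4*k-1) + T (4*k-2) + T (4*k-3) :=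
      key (4*k) (by omega)
    have r4 : T (4*k-1) = T (4*k-2) + T (4*k-3) + T (4*k-4) := by
      have := key (4*k-1) (by omega)
      rw [this]; congr 2
    have r3 : T (4*k-2) = T (4*k-3) + T (4*k-4) + T (4*k-5) := by
      have := key (4*k-2) (by omega)
      rw [this]; congr 2
    rw [r5, r4, r3] at ih
    rw [r9, r8, r7, r6, r5, r4, r3]
    linear_combination ih
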